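/- Shuffles of finite orders are determined by the multiset of sizes up to duplicates: ℚ_n(t₀,...,t_{n-1}) ≅ ℚ_m(s₀,...,s_{m-1}) for finite nonempty linear orders t_i, s_j if and only if {|t₀|,...,|t_{n-1}|} and {|s₀|,...,|s_{m-1}|} are equal as sets of natural numbers. -/

import Mathlib

noncomputable section

open Order

namespace ShuffleAux

variable {α β : Type*} [LinearOrder α] [LinearOrder β]

/-- Coloured version of `Order.exists_between_finsets`. -/
theorem exists_between_finsets_colour [DenselyOrdered β] [NoMinOrder β] [NoMaxOrder β]
    [Nonempty β] (d' : β → ℕ)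
    (hd' : ∀ x y : β, x < y → ∀ v ∈ Set.range d', ∃ z, x < z ∧ z < y ∧ d' z = v)
    (lo hi : Finset β) (lo_lt_hi : ∀ x ∈ lo, ∀ y ∈ hi, x < y) (v : ℕ)
    (hv : v ∈ Set.range d') :
    ∃ m : β, (∀ x ∈ lo, x < m) ∧ (∀ y ∈ hi, m < y) ∧ d' m = v := by
  obtain ⟨x0, y0, hxy, hlo, hhi⟩ :
      ∃ x0 y0 : β, x0 < y0 ∧ (∀ x ∈ lo, x ≤ x0) ∧ ∀ y ∈ hi, y0 ≤ y := by
    by_cases nlo : lo.Nonempty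
    · by_cases nhi : hi.Nonempty
      · exact ⟨lo.max' nlo, hi.min' nhi,
          lo_lt_hi _ (lo.max'_mem nlo) _ (hi.min'_mem nhi),
          fun x hx => lo.le_max' x hx, fun y hy => hi.min'_le y hy⟩
      · obtain ⟨y0, hy0⟩ := exists_gt (lo.max' nlo)
        exact ⟨_, y0, hy0, fun x hx => lo.le_max' x hx,
          fun y hy => absurd ⟨y, hy⟩ nhi⟩
    · by_cases nhi : hi.Nonempty
      · obtain ⟨x0, hx0⟩ := exists_lt (hi.min' nhi)
        exact ⟨x0, _, hx0, fun x hx => absurd ⟨x, hx⟩ nlo, fun y hy => hi.min'_le y hy⟩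
      · obtain ⟨x0⟩ := ‹Nonempty β›
        obtain ⟨y0, hy0⟩ := exists_gt x0
        exact ⟨x0, y0, hy0, fun x hx => absurd ⟨x, hx⟩ nlo, fun y hy => absurd ⟨y, hy⟩ nhi⟩
  obtain ⟨m, hm1, hm2, hm3⟩ := hd' x0 y0 hxy v hv
  exact ⟨m, fun x hx => lt_of_le_of_lt (hlo x hx) hm1,
    fun y hy => lt_of_lt_of_le hm2 (hhi y hy), hm3⟩

variable (d : α → ℕ) (d' : β → ℕ)

/-- Coloured partial isomorphisms. -/
def CPartialIso : Type _ :=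
  { f : Finset (α × β) //
    (∀ p ∈ f, ∀ q ∈ f, cmp (Prod.fst p) (Prod.fst q) = cmp (Prod.snd p) (Prod.snd q)) ∧
      ∀ p ∈ f, d (Prod.fst p) = d' (Prod.snd p) }

namespace CPartialIso

instance : Inhabited (CPartialIso d d') :=
  ⟨⟨∅, fun _p h => (Finset.notMem_empty _ h).elim, fun _p h => (Finset.notMem_empty _ h).elim⟩⟩

instance : Preorder (CPartialIso d d') := Subtype.preorder _

variable {d d'}

theorem exists_across [DenselyOrdered β] [NoMinOrder β] [NoMaxOrder β] [Nonempty β]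
    (hr : Set.range d = Set.range d')
    (hd' : ∀ x y : β, x < y → ∀ v ∈ Set.range d', ∃ z, x < z ∧ z < y ∧ d' z = v)
    (f : CPartialIso d d') (a : α) :
    ∃ b : β, d' b = d a ∧ ∀ p ∈ f.val, cmp (Prod.fst p) a = cmp (Prod.snd p) b := by
  by_cases h : ∃ b, (a, b) ∈ f.val
  · obtain ⟨b, hb⟩ := h
    exact ⟨b, (f.prop.2 _ hb).symm, fun p hp => f.prop.1 _ hp _ hb⟩
  have this :
      ∀ x ∈ (f.val.filter fun p : α × β => p.fst < a).image Prod.snd,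
        ∀ y ∈ (f.val.filter fun p : α × β => a < p.fst).image Prod.snd, x < y := by
    intro x hx y hy
    rw [Finset.mem_image] at hx hy
    rcases hx with ⟨p, hp1, rfl⟩
    rcases hy with ⟨q, hq1, rfl⟩
    rw [Finset.mem_filter] at hp1 hq1
    rw [← lt_iff_lt_of_cmp_eq_cmp (f.prop.1 _ hp1.1 _ hq1.1)]
    exact lt_trans hp1.right hq1.right
  obtain ⟨b, hb1, hb2, hb3⟩ := exists_between_finsets_colour d' hd' _ _ this (d a)
    (hr ▸ Set.mem_range_self a)
  refine ⟨b, hb3, ?_⟩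
  rintro ⟨p1, p2⟩ hp
  have hne : p1 ≠ a := fun he => h ⟨p2, he ▸ hp⟩
  rcases lt_or_gt_of_ne hne with hl | hr'
  · have h2 : p1 < a ∧ p2 < b :=
      ⟨hl, hb1 _ (Finset.mem_image.mpr ⟨(p1, p2), Finset.mem_filter.mpr ⟨hp, hl⟩, rfl⟩)⟩
    rw [← cmp_eq_lt_iff, ← cmp_eq_lt_iff] at h2
    exact h2.1.trans h2.2.symm
  · have h2 : a < p1 ∧ b < p2 :=
      ⟨hr', hb2 _ (Finset.mem_image.mpr ⟨(p1, p2), Finset.mem_filter.mpr ⟨hp, hr'⟩, rfl⟩)⟩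
    rw [← cmp_eq_gt_iff, ← cmp_eq_gt_iff] at h2
    exact h2.1.trans h2.2.symm

/-- Flip a coloured partial isomorphism. -/
protected def comm (f : CPartialIso d d') : CPartialIso d' d :=
  ⟨f.val.image (Equiv.prodComm _ _), by
    constructor
    · intro p hp q hq
      rw [Finset.mem_image] at hp hq
      obtain ⟨p0, hp0, rfl⟩ := hp
      obtain ⟨q0, hq0, rfl⟩ := hq
      exact (f.prop.1 _ hp0 _ hq0).symm
    · intro p hp
      rw [Finset.mem_image] at hp
      obtain ⟨p0, hp0, rfl⟩ := hp
      exact (f.prop.2 _ hp0).symm⟩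

variable (d d')

/-- Partial isos defined at `a : α`. -/
def definedAtLeft [DenselyOrdered β] [NoMinOrder β] [NoMaxOrder β] [Nonempty β]
    (hr : Set.range d = Set.range d')
    (hd' : ∀ x y : β, x < y → ∀ v ∈ Set.range d', ∃ z, x < z ∧ z < y ∧ d' z = v)
    (a : α) : Cofinal (CPartialIso d d') where
  carrier := {f | ∃ b : β, (a, b) ∈ f.val}
  isCofinal f := by
    obtain ⟨b, hb0, a_b⟩ := exists_across hr hd' f a
    refine ⟨⟨insert (a, b) f.val, ?_, ?_⟩, ⟨b, Finset.mem_insert_self _ _⟩,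
      Finset.subset_insert _ _⟩
    · intro p hp q hq
      rw [Finset.mem_insert] at hp hq
      rcases hp with (rfl | pf) <;> rcases hq with (rfl | qf)
      · simp only [cmp_self_eq_eq]
      · rw [cmp_eq_cmp_symm]; exact a_b _ qf
      · exact a_b _ pf
      · exact f.prop.1 _ pf _ qf
    · intro p hp
      rw [Finset.mem_insert] at hp
      rcases hp with rfl | pf
      · exact hb0.symm
      · exact f.prop.2 _ pf

/-- Partial isos defined at `b : β`. -/
def definedAtRight [DenselyOrdered α] [NoMinOrder α] [NoMaxOrder α] [Nonempty α]
    (hr : Set.range d = Set.range d')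
    (hd : ∀ x y : α, x < y → ∀ v ∈ Set.range d, ∃ z, x < z ∧ z < y ∧ d z = v)
    (b : β) : Cofinal (CPartialIso d d') where
  carrier := {f | ∃ a, (a, b) ∈ f.val}
  isCofinal f := by
    rcases (definedAtLeft d' d hr.symm hd b).isCofinal f.comm with ⟨f', ⟨a, ha⟩, hl⟩
    refine ⟨f'.comm, ⟨a, ?_⟩, fun p hp => ?_⟩
    · simpa [CPartialIso.comm, Finset.mem_image] using
        Finset.mem_image_of_mem (Equiv.prodComm β α) ha
    · have h1 : (Equiv.prodComm α β) p ∈ f.comm.val :=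
        Finset.mem_image_of_mem _ hp
      have h2 : (Equiv.prodComm α β) p ∈ f'.val := hl h1
      have h3 : (Equiv.prodComm β α) ((Equiv.prodComm α β) p) ∈ f'.comm.val :=
        Finset.mem_image_of_mem _ h2
      simpa using h3

end CPartialIso

open CPartialIso in
/-- Coloured Cantor back-and-forth. -/
theorem iso_colour [Countable α] [DenselyOrdered α] [NoMinOrder α] [NoMaxOrder α] [Nonempty α]
    [Countable β] [DenselyOrdered β] [NoMinOrder β] [NoMaxOrder β] [Nonempty β]
    (hr : Set.range d = Set.range d')
    (hd : ∀ x y : α, x < y → ∀ v ∈ Set.range d, ∃ z, x < z ∧ z < y ∧ d z = v)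
    (hd' : ∀ x y : β, x < y → ∀ v ∈ Set.range d', ∃ z, x < z ∧ z < y ∧ d' z = v) :
    ∃ f : α ≃o β, ∀ a : α, d' (f a) = d a := by
  cases nonempty_encodable α
  cases nonempty_encodable β
  let to_cofinal : α ⊕ β → Cofinal (CPartialIso d d') := fun p =>
    Sum.recOn p (definedAtLeft d d' hr hd') (definedAtRight d d' hr hd)
  let our_ideal : Ideal (CPartialIso d d') := idealOfCofinals default to_cofinal
  have Fmem : ∀ a : α, ∃ f ∈ our_ideal, ∃ b : β, (a, b) ∈ f.val := by
    intro a
    obtain ⟨f, hf1, hf2⟩ := cofinal_meets_idealOfCofinals default to_cofinal (Sum.inl a)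
    exact ⟨f, hf2, hf1⟩
  have Gmem : ∀ b : β, ∃ f ∈ our_ideal, ∃ a : α, (a, b) ∈ f.val := by
    intro b
    obtain ⟨f, hf1, hf2⟩ := cofinal_meets_idealOfCofinals default to_cofinal (Sum.inr b)
    exact ⟨f, hf2, hf1⟩
  choose fF hfF F hF using Fmem
  choose fG hfG G hG using Gmem
  have key : ∀ (a : α) (b : β), cmp a (G b) = cmp (F a) b := by
    intro a b
    rcases our_ideal.directed _ (hfF a) _ (hfG b) with ⟨m, _, fm, gm⟩
    exact m.prop.1 (a, _) (fm (hF a)) (_, b) (gm (hG b))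
  refine ⟨OrderIso.ofCmpEqCmp F G key, fun a => ?_⟩
  exact (fF a).prop.2 _ (hF a) |>.symm

end ShuffleAux

set_option linter.unusedSectionVars false

namespace ShuffleAux2

/-- Build an order iso of lex sigmas from compatible isos. -/
noncomputable def sigmaLexCongr {ι ι' : Type*} [LinearOrder ι] [LinearOrder ι']
    {A : ι → Type*} {B : ι' → Type*} [∀ i, LinearOrder (A i)] [∀ j, LinearOrder (B j)]
    (f : ι ≃o ι') (g : ∀ i, A i ≃o B (f i)) :
    (Σₗ i, A i) ≃o (Σₗ j, B j) := by
  let φ : (Σₗ i, A i) → (Σₗ j, B j) :=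
    fun p => toLex ⟨f (ofLex p).1, g (ofLex p).1 (ofLex p).2⟩
  have hs : Function.Surjective φ := by
    rintro ⟨j, y⟩
    obtain ⟨i, rfl⟩ : ∃ i, f i = j := ⟨f.symm j, f.apply_symm_apply j⟩
    exact ⟨toLex ⟨i, (g i).symm y⟩,
      congrArg (fun z => (toLex ⟨f i, z⟩ : Σₗ j, B j)) ((g i).apply_symm_apply y)⟩
  have hm : StrictMono φ := by
    rintro ⟨i, x⟩ ⟨i', y⟩ h
    have h := Sigma.Lex.lt_def.mp h; refine Sigma.Lex.lt_def.mpr ?_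
    rcases h with h | ⟨h, hlt⟩
    · exact Or.inl (show f i < f i' from f.strictMono h)
    · dsimp only at h hlt ⊢
      subst h
      exact Or.inr ⟨rfl, show g i x < g i y from (g i).strictMono hlt⟩
  exact StrictMono.orderIsoOfSurjective φ hm hs

/-- The fiber of a sigma over `q` is equivalent to the fibre type. -/
def fiberEquiv {Q : Type*} {T : Q → Type*} (q : Q) :
    {z : Σ q, T q // z.1 = q} ≃ T q where
  toFun z := z.2 ▸ z.1.2
  invFun a := ⟨⟨q, a⟩, rfl⟩
  left_inv := by rintro ⟨⟨q0, a⟩, rfl⟩; rfl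
  right_inv a := rfl

variable {Q : Type*} [LinearOrder Q] {T : Q → Type*} [∀ q, LinearOrder (T q)]

theorem fst_le_of_le {x z : Σₗ q, T q} (h : x ≤ z) : x.1 ≤ z.1 := by
  rw [Sigma.Lex.le_def] at h
  rcases h with h | ⟨h, -⟩
  · exact h.le
  · exact h.le

theorem fiber_finite (q : Q) [Finite (T q)] : {z : Σₗ q, T q | z.1 = q}.Finite := by
  have : {z : Σₗ q, T q | z.1 = q} = Set.range (fun a : T q => toLex ⟨q, a⟩) := by
    ext z
    constructor
    · rintro h
      obtain ⟨q0, a⟩ := z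
      cases h
      exact ⟨a, rfl⟩
    · rintro ⟨a, rfl⟩; rfl
  rw [this]
  exact Set.finite_range _

theorem base_eq_iff_finite [DenselyOrdered Q] [∀ q, Finite (T q)] [∀ q, Nonempty (T q)]
    {x y : Σₗ q, T q} (h : x ≤ y) : x.1 = y.1 ↔ (Set.Icc x y).Finite := by
  constructor
  · intro hxy
    refine (fiber_finite (T := T) x.1).subset ?_
    rintro z ⟨h1, h2⟩
    exact le_antisymm (by rw [hxy]; exact fst_le_of_le h2) (fst_le_of_le h1)
  · intro hfin
    by_contra hne
    have hlt : x.1 < y.1 := lt_of_le_of_ne (fst_le_of_le h) hne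
    have : Infinite (Set.Ioo x.1 y.1) := Set.Ioo.infinite hlt
    have hinj : Function.Injective
        (fun p : Set.Ioo x.1 y.1 => (⟨toLex ⟨p.1, Classical.arbitrary _⟩,
          Set.mem_Icc.mpr ⟨le_of_lt (Sigma.Lex.lt_def.mpr (Or.inl p.2.1)),
            le_of_lt (Sigma.Lex.lt_def.mpr (Or.inl p.2.2))⟩⟩ : Set.Icc x y)) := by
      rintro ⟨p, hp⟩ ⟨p', hp'⟩ hpp
      have h2 := congrArg (fun w : Set.Icc x y => (w.1 : Σₗ q, T q).1) hpp
      exact Subtype.ext h2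
    exact (Set.infinite_coe_iff.mp (Infinite.of_injective _ hinj)) hfin

end ShuffleAux2
namespace ShuffleAux2

section
variable {Q Q' : Type*} [LinearOrder Q] [LinearOrder Q']
  {T : Q → Type*} [∀ q, LinearOrder (T q)] [∀ q, Finite (T q)] [∀ q, Nonempty (T q)]
  {S : Q' → Type*} [∀ q', LinearOrder (S q')] [∀ q', Finite (S q')] [∀ q', Nonempty (S q')]

theorem iso_fst_eq [DenselyOrdered Q] [DenselyOrdered Q']
    (e : (Σₗ q, T q) ≃o (Σₗ q', S q')) {z x : Σₗ q, T q} (h : z.1 = x.1) :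
    (e z).1 = (e x).1 := by
  rcases le_total z x with h1 | h1
  · have hfin : (Set.Icc z x).Finite := (base_eq_iff_finite h1).mp h
    refine (base_eq_iff_finite (e.monotone h1)).mpr ?_
    rw [← OrderIso.image_Icc]
    exact hfin.image _
  · have hfin : (Set.Icc x z).Finite := (base_eq_iff_finite h1).mp h.symm
    refine ((base_eq_iff_finite (e.monotone h1)).mpr ?_).symm
    rw [← OrderIso.image_Icc]
    exact hfin.image _

/-- An order isomorphism of shuffles maps fibers onto fibers of the same cardinality. -/
theorem card_fiber_transfer [DenselyOrdered Q] [DenselyOrdered Q']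
    (e : (Σₗ q, T q) ≃o (Σₗ q', S q')) (q : Q) :
    ∃ q' : Q', Nat.card (T q) = Nat.card (S q') := by
  classical
  let x : Σₗ q, T q := toLex ⟨q, Classical.arbitrary _⟩
  refine ⟨(e x).1, ?_⟩
  have himg : e '' {z : Σₗ q, T q | z.1 = q} = {w : Σₗ q', S q' | w.1 = (e x).1} := by
    ext w
    constructor
    · rintro ⟨z, hz, rfl⟩
      exact iso_fst_eq e (show z.1 = x.1 from hz)
    · intro hw
      refine ⟨e.symm w, ?_, e.apply_symm_apply w⟩
      have : (e.symm w).1 = (e.symm (e x)).1 :=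
        iso_fst_eq e.symm (show w.1 = (e x).1 from hw)
      rw [e.symm_apply_apply] at this; exact this
  have h1 : Nat.card (T q) = Nat.card {z : Σₗ q, T q | z.1 = q} :=
    (Nat.card_congr (fiberEquiv q)).symm
  have h2 : Nat.card (S (e x).1) = Nat.card {w : Σₗ q', S q' | w.1 = (e x).1} :=
    (Nat.card_congr (fiberEquiv (e x).1)).symm
  rw [h1, h2, ← himg, Nat.card_image_of_injective e.injective]

end
end ShuffleAux2

/-- `Q` together with the colouring `c : Q → Fin n` is a copy of the `n`-coloured
rationals `ℚ_n`: a countable nonempty dense linear order without endpoints in which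
each of the `n` colours occurs interdensely. -/
def IsQn (n : ℕ) (Q : Type*) [LinearOrder Q] (c : Q → Fin n) : Prop :=
  Countable Q ∧ Nonempty Q ∧ DenselyOrdered Q ∧ NoMinOrder Q ∧ NoMaxOrder Q ∧
    ∀ x y : Q, x < y → ∀ i : Fin n, ∃ z : Q, x < z ∧ z < y ∧ c z = i

/-- Shuffles of finite nonempty orders are determined by the set of sizes:
ℚ_n(t₀,...,t_{n-1}) ≅ ℚ_m(s₀,...,s_{m-1}) iff the sets of cardinalities of the
t_i and of the s_j coincide. -/
theorem shuffle_iso_iff_sizes (n m : ℕ) (Q Q' : Type*) [LinearOrder Q]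
    [LinearOrder Q'] (c : Q → Fin n) (c' : Q' → Fin m)
    (hQ : IsQn n Q c) (hQ' : IsQn m Q' c')
    (t : Fin n → Type*) [∀ i, LinearOrder (t i)] [∀ i, Finite (t i)]
    [∀ i, Nonempty (t i)]
    (s : Fin m → Type*) [∀ j, LinearOrder (s j)] [∀ j, Finite (s j)]
    [∀ j, Nonempty (s j)] :
    Nonempty ((Σₗ q : Q, t (c q)) ≃o (Σₗ q' : Q', s (c' q'))) ↔
      (Set.range fun i => Nat.card (t i)) = (Set.range fun j => Nat.card (s j)) := by
  obtain ⟨hQ1, hQ2, hQ3, hQ4, hQ5, hQ6⟩ := hQ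
  obtain ⟨hQ'1, hQ'2, hQ'3, hQ'4, hQ'5, hQ'6⟩ := hQ'
  haveI := hQ1; haveI := hQ2; haveI := hQ3; haveI := hQ4; haveI := hQ5
  haveI := hQ'1; haveI := hQ'2; haveI := hQ'3; haveI := hQ'4; haveI := hQ'5
  have hcsurj : Function.Surjective c := by
    intro i
    obtain ⟨x⟩ := hQ2
    obtain ⟨y, hy⟩ := exists_gt x
    obtain ⟨z, _, _, hz⟩ := hQ6 x y hy i
    exact ⟨z, hz⟩
  have hcsurj' : Function.Surjective c' := by
    intro j
    obtain ⟨x⟩ := hQ'2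
    obtain ⟨y, hy⟩ := exists_gt x
    obtain ⟨z, _, _, hz⟩ := hQ'6 x y hy j
    exact ⟨z, hz⟩
  constructor
  · rintro ⟨e⟩
    apply Set.eq_of_subset_of_subset
    · rintro v ⟨i, rfl⟩
      obtain ⟨q, rfl⟩ := hcsurj i
      obtain ⟨q', h⟩ := ShuffleAux2.card_fiber_transfer e q
      exact ⟨c' q', h.symm⟩
    · rintro v ⟨j, rfl⟩
      obtain ⟨q', rfl⟩ := hcsurj' j
      obtain ⟨q, h⟩ := ShuffleAux2.card_fiber_transfer e.symm q'
      exact ⟨c q, h.symm⟩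
  · intro hrange
    set d : Q → ℕ := fun q => Nat.card (t (c q)) with hd_def
    set d' : Q' → ℕ := fun q' => Nat.card (s (c' q')) with hd'_def
    have hrd : Set.range d = Set.range fun i => Nat.card (t i) :=
      hcsurj.range_comp fun i => Nat.card (t i)
    have hrd' : Set.range d' = Set.range fun j => Nat.card (s j) :=
      hcsurj'.range_comp fun j => Nat.card (s j)
    have hr : Set.range d = Set.range d' := by rw [hrd, hrd', hrange]
    have hdi : ∀ x y : Q, x < y → ∀ v ∈ Set.range d, ∃ z, x < z ∧ z < y ∧ d z = v := by
      rintro x y hxy v ⟨q0, rfl⟩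
      obtain ⟨z, hz1, hz2, hz3⟩ := hQ6 x y hxy (c q0)
      exact ⟨z, hz1, hz2, by simp only [hd_def, hz3]⟩
    have hdi' : ∀ x y : Q', x < y → ∀ v ∈ Set.range d', ∃ z, x < z ∧ z < y ∧ d' z = v := by
      rintro x y hxy v ⟨q0, rfl⟩
      obtain ⟨z, hz1, hz2, hz3⟩ := hQ'6 x y hxy (c' q0)
      exact ⟨z, hz1, hz2, by simp only [hd'_def, hz3]⟩
    obtain ⟨f, hf⟩ := ShuffleAux.iso_colour d d' hr hdi hdi'
    letI : ∀ i, Fintype (t i) := fun i => Fintype.ofFinite _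
    letI : ∀ j, Fintype (s j) := fun j => Fintype.ofFinite _
    have hcard : ∀ q : Q, Fintype.card (s (c' (f q))) = Fintype.card (t (c q)) := by
      intro q
      rw [← Nat.card_eq_fintype_card, ← Nat.card_eq_fintype_card]
      exact hf q
    exact ⟨ShuffleAux2.sigmaLexCongr f fun q =>
      ((Fintype.orderIsoFinOfCardEq (t (c q)) rfl).symm).trans
        (Fintype.orderIsoFinOfCardEq (s (c' (f q))) (hcard q))⟩
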